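/- Let G = (V,E) be a graph and S ⊆ V a set of vertices with exactly m edges having one endpoint in S (counting edges from S to N(S), with multiplicity over endpoints in S), such that |N(S)| ≥ (1−α)·m for some α ≥ 0. Then the number of unique neighbors of S (vertices adjacent to exactly one vertex in S) is at least (1−2α)·m. -/
import Mathlib


/-- The neighborhood `N(S)` of a set of vertices. -/
def nbhd {V : Type*} [Fintype V] [DecidableEq V] (G : SimpleGraph V)
    [DecidableRel G.Adj] (S : Finset V) : Finset V :=
  S.biUnion fun s => G.neighborFinset s

/-- If `S` has `m` outgoing edge-endpoint pairs and `|N(S)| ≥ (1−α)m`,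
then `S` has at least `(1−2α)m` unique neighbors. -/
theorem stmt1 {V : Type*} [Fintype V] [DecidableEq V] (G : SimpleGraph V)
    [DecidableRel G.Adj] (S : Finset V) (m : ℕ) (α : ℝ) (hα : 0 ≤ α)
    (hm : m = ∑ s ∈ S, G.degree s)
    (hexp : (1 - α) * m ≤ ((nbhd G S).card : ℝ)) :
    (1 - 2 * α) * m ≤
      ((Finset.univ.filter fun u => (S.filter fun s => G.Adj s u).card = 1).card : ℝ) := by
  classical
  set f : V → ℕ := fun u => (S.filter fun s => G.Adj s u).card with hf
  set U : Finset V := Finset.univ.filter fun u => f u = 1 with hU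
  -- double counting: m = ∑ u, f u
  have hm' : m = ∑ u, f u := by
    have hdeg : ∀ s, G.degree s = ∑ u, if G.Adj s u then 1 else 0 := by
      intro s
      rw [SimpleGraph.degree, SimpleGraph.neighborFinset_eq_filter, Finset.card_filter]
    rw [hm]
    simp_rw [hdeg]
    rw [Finset.sum_comm]
    refine Finset.sum_congr rfl fun u _ => ?_
    exact (Finset.card_filter (fun s => G.Adj s u) S).symm
  -- m ≥ ∑ u in nbhd, f u
  have hsub : ∑ u ∈ nbhd G S, f u ≤ m := by
    rw [hm']
    exact Finset.sum_le_sum_of_subset (Finset.subset_univ _)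
  -- each u in nbhd has f u ≥ 1
  have hmem : ∀ u ∈ nbhd G S, 1 ≤ f u := by
    intro u hu
    simp only [nbhd, Finset.mem_biUnion, SimpleGraph.mem_neighborFinset] at hu
    obtain ⟨s, hs, hadj⟩ := hu
    rw [Nat.one_le_iff_ne_zero, hf]
    simp only [ne_eq, Finset.card_eq_zero, Finset.filter_eq_empty_iff, not_forall]
    exact ⟨s, hs, by simpa using hadj⟩
  -- key: 2 * |nbhd| ≤ m + |U|
  have key : 2 * (nbhd G S).card ≤ m + U.card := by
    have h1 : ∀ u ∈ nbhd G S, 2 ≤ f u + (if f u = 1 then 1 else 0) := by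
      intro u hu
      by_cases h : f u = 1
      · simp [h]
      · have := hmem u hu
        have : 2 ≤ f u := by omega
        simp [h]; omega
    have h2 : 2 * (nbhd G S).card ≤ ∑ u ∈ nbhd G S, (f u + (if f u = 1 then 1 else 0)) := by
      calc 2 * (nbhd G S).card = ∑ _u ∈ nbhd G S, 2 := by
            rw [Finset.sum_const, smul_eq_mul, mul_comm]
        _ ≤ _ := Finset.sum_le_sum h1
    rw [Finset.sum_add_distrib] at h2
    have h3 : ∑ u ∈ nbhd G S, (if f u = 1 then 1 else 0) ≤ U.card := by
      rw [hU, Finset.card_filter]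
      exact Finset.sum_le_sum_of_subset (Finset.subset_univ _)
    omega
  -- now real arithmetic
  have hkeyR : 2 * ((nbhd G S).card : ℝ) ≤ (m : ℝ) + (U.card : ℝ) := by
    exact_mod_cast key
  have := hexp
  nlinarith [hexp, hkeyR, Nat.cast_nonneg (α := ℝ) m]
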